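/- The paths P_1 (one vertex) and P_2 (one edge) are the only reduced trees having at most one adjacency eigenvalue in the open interval (-1, 1), counted with multiplicity. -/

import Mathlib

open scoped Classical

/-- Characteristic polynomial of the adjacency matrix of a graph. -/
noncomputable def gCharpoly {V : Type*} [Fintype V] (G : SimpleGraph V) : Polynomial ℝ :=
  letI := Classical.decEq V
  letI := Classical.decRel G.Adj
  (G.adjMatrix ℝ).charpoly

/-- Adjacency eigenvalues listed in non-increasing order (with multiplicity). -/
noncomputable def eigsDesc {V : Type*} [Fintype V] (G : SimpleGraph V) : List ℝ :=
  ((gCharpoly G).roots.sort (· ≤ ·)).reverse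

/-- Number of adjacency eigenvalues in the open interval (-1, 1), with multiplicity. -/
noncomputable def numIn {V : Type*} [Fintype V] (G : SimpleGraph V) : ℕ :=
  ((gCharpoly G).roots.filter (fun x => -1 < x ∧ x < 1)).card

/-- Multiplicity of `lam` as an adjacency eigenvalue. -/
noncomputable def multOf {V : Type*} [Fintype V] (G : SimpleGraph V) (lam : ℝ) : ℕ :=
  (gCharpoly G).roots.count lam

/-- Nullity: dimension of the kernel of the adjacency matrix. -/
noncomputable def gNullity {V : Type*} [Fintype V] (G : SimpleGraph V) : ℕ :=
  letI := Classical.decRel G.Adj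
  Module.finrank ℝ (LinearMap.ker (G.adjMatrix ℝ).mulVecLin)

/-- There is a pendant `P₂` at `v`: the graph minus `v` has a connected component
isomorphic to `P₂`, consisting of adjacent vertices `a, b` all of whose other
neighbors are `v`. -/
def HasPendantP2At {V : Type*} (G : SimpleGraph V) (v : V) : Prop :=
  ∃ a b : V, a ≠ v ∧ b ≠ v ∧ G.Adj a b ∧
    (∀ w, G.Adj a w → w = b ∨ w = v) ∧ (∀ w, G.Adj b w → w = a ∨ w = v)

/-- A graph is reduced if it has no pendant `P₂` at any vertex. -/
def Reduced {V : Type*} (G : SimpleGraph V) : Prop :=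
  ∀ v : V, ¬ HasPendantP2At G v

open SimpleGraph Polynomial Matrix Finset

namespace Stmt6Aux

variable {V : Type*}

/-! ### Tree distance lemmas -/

section TreeLemmas
variable {T : SimpleGraph V}

lemma dist_le_of_mem_support {r v x : V} {p : T.Walk r v} (hx : x ∈ p.support) :
    T.dist r x ≤ p.length :=
  le_trans (SimpleGraph.dist_le _) (p.length_takeUntil_le hx)

lemma adjA (hT : T.IsTree) {r v w : V} (p : T.Walk r v) (hp : p.length = T.dist r v)
    (h : T.Adj v w) (hx : w ∈ p.support) : T.dist r w + 1 = T.dist r v := by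
  have hpath : p.IsPath := p.isPath_of_length_eq_dist hp
  have hq : (p.dropUntil w hx).IsPath := hpath.dropUntil hx
  have huniq : (⟨p.dropUntil w hx, hq⟩ : T.Path w v) = SimpleGraph.Path.singleton h.symm :=
    hT.IsAcyclic.path_unique _ _
  have hlen1 : (p.dropUntil w hx).length = 1 := by
    have := congrArg (fun q : T.Path w v => (q : T.Walk w v).length) huniq
    simpa [SimpleGraph.Path.singleton] using this
  have hsplit := congrArg SimpleGraph.Walk.length (p.take_spec hx)
  rw [SimpleGraph.Walk.length_append, hlen1] at hsplit
  have h1 : T.dist r w ≤ (p.takeUntil w hx).length := SimpleGraph.dist_le _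
  have h2 : T.dist r v ≤ T.dist r w + 1 := by
    have := hT.isConnected.dist_triangle (u := r) (v := w) (w := v)
    have hwv : T.dist w v = 1 := SimpleGraph.dist_eq_one_iff_adj.mpr h.symm
    omega
  omega

lemma adjB (hT : T.IsTree) {r v w : V} (h : T.Adj v w) :
    T.dist r w + 1 = T.dist r v ∨ T.dist r v + 1 = T.dist r w := by
  obtain ⟨p, hp⟩ := hT.isConnected.exists_walk_length_eq_dist r v
  obtain ⟨q, hq⟩ := hT.isConnected.exists_walk_length_eq_dist r w
  by_cases hw : w ∈ p.support
  · exact Or.inl (adjA hT p hp h hw)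
  by_cases hv : v ∈ q.support
  · exact Or.inr (adjA hT q hq h.symm hv)
  exfalso
  have hppath : p.IsPath := p.isPath_of_length_eq_dist hp
  have hcp : (p.concat h).IsPath := by
    rw [← SimpleGraph.Walk.isPath_reverse_iff, SimpleGraph.Walk.reverse_concat]
    exact SimpleGraph.Walk.IsPath.cons hppath.reverse (by simpa using hw)
  have huniq : (⟨p.concat h, hcp⟩ : T.Path r w) = ⟨q, q.isPath_of_length_eq_dist hq⟩ :=
    hT.IsAcyclic.path_unique _ _
  have : v ∈ q.support := by
    have := congrArg (fun z : T.Path r w => v ∈ (z : T.Walk r w).support) huniq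
    simp only [eq_iff_iff] at this
    rw [← this]
    simp [SimpleGraph.Walk.support_concat]
  exact hv this

lemma below_exists (hT : T.IsTree) {r v : V} (hv : v ≠ r) :
    ∃ b, T.Adj v b ∧ T.dist r b + 1 = T.dist r v := by
  obtain ⟨p, hp⟩ := hT.isConnected.exists_walk_length_eq_dist r v
  obtain ⟨b, hadj, q, hpq⟩ := SimpleGraph.Walk.exists_eq_cons_of_ne hv p.reverse
  refine ⟨b, hadj, ?_⟩
  have hlen : q.length + 1 = T.dist r v := by
    have := congrArg SimpleGraph.Walk.length hpq
    simp only [SimpleGraph.Walk.length_reverse, SimpleGraph.Walk.length_cons] at this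
    omega
  have h1 : T.dist r b ≤ q.length := by
    have := SimpleGraph.dist_le q.reverse
    simpa [SimpleGraph.Walk.length_reverse] using this
  have h2 : T.dist r v ≤ T.dist r b + 1 := by
    have := hT.isConnected.dist_triangle (u := r) (v := b) (w := v)
    have hbv : T.dist b v = 1 := SimpleGraph.dist_eq_one_iff_adj.mpr hadj.symm
    omega
  omega

lemma below_unique (hT : T.IsTree) {r v b₁ b₂ : V} (h₁ : T.Adj v b₁) (h₂ : T.Adj v b₂)
    (hd₁ : T.dist r b₁ + 1 = T.dist r v) (hd₂ : T.dist r b₂ + 1 = T.dist r v) : b₁ = b₂ := by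
  obtain ⟨q₁, hq₁⟩ := hT.isConnected.exists_walk_length_eq_dist r b₁
  obtain ⟨q₂, hq₂⟩ := hT.isConnected.exists_walk_length_eq_dist r b₂
  have hv₁ : v ∉ q₁.support := fun hv => by
    have := dist_le_of_mem_support hv; omega
  have hv₂ : v ∉ q₂.support := fun hv => by
    have := dist_le_of_mem_support hv; omega
  have c₁ : (q₁.concat h₁.symm).IsPath := by
    rw [← SimpleGraph.Walk.isPath_reverse_iff, SimpleGraph.Walk.reverse_concat]
    exact SimpleGraph.Walk.IsPath.cons (q₁.isPath_of_length_eq_dist hq₁).reverse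
      (by simpa using hv₁)
  have c₂ : (q₂.concat h₂.symm).IsPath := by
    rw [← SimpleGraph.Walk.isPath_reverse_iff, SimpleGraph.Walk.reverse_concat]
    exact SimpleGraph.Walk.IsPath.cons (q₂.isPath_of_length_eq_dist hq₂).reverse
      (by simpa using hv₂)
  have huniq : (⟨q₁.concat h₁.symm, c₁⟩ : T.Path r v) = ⟨q₂.concat h₂.symm, c₂⟩ :=
    hT.IsAcyclic.path_unique _ _
  have hwalk : q₁.concat h₁.symm = q₂.concat h₂.symm := congrArg Subtype.val huniq
  obtain ⟨hb, -⟩ := SimpleGraph.Walk.concat_inj hwalk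
  exact hb

lemma leaf_of_max (hT : T.IsTree) {r u : V} (hmax : ∀ v, T.dist r v ≤ T.dist r u)
    (hu : u ≠ r) : ∃ b, T.Adj u b ∧ T.dist r b + 1 = T.dist r u ∧ ∀ w, T.Adj u w → w = b := by
  obtain ⟨b, hb, hbd⟩ := below_exists hT hu
  refine ⟨b, hb, hbd, fun w hw => ?_⟩
  rcases adjB hT (r := r) hw with hcase | hcase
  · exact below_unique hT hw hb hcase hbd
  · exact absurd (hmax w) (by omega)

lemma deep_pair [Fintype V] (hT : T.IsTree) (hred : Reduced T) {r v₀ : V}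
    (h2 : 2 ≤ T.dist r v₀) :
    ∃ x y b, x ≠ y ∧ (∀ w, T.Adj x w → w = b) ∧ (∀ w, T.Adj y w → w = b) ∧ T.Adj x b ∧ T.Adj y b
      ∧ 2 ≤ T.dist r x ∧ 2 ≤ T.dist r y := by
  obtain ⟨a, -, hamax'⟩ := Finset.exists_max_image Finset.univ (T.dist r) ⟨v₀, Finset.mem_univ _⟩
  have hmax : ∀ v, T.dist r v ≤ T.dist r a := fun v => hamax' v (Finset.mem_univ v)
  have hD : 2 ≤ T.dist r a := le_trans h2 (hmax v₀)
  have har : a ≠ r := by rintro rfl; simp [SimpleGraph.dist_self] at hD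
  obtain ⟨b, hab, hbd, hbuniq⟩ := leaf_of_max hT hmax har
  have hbr : b ≠ r := by rintro rfl; rw [SimpleGraph.dist_self] at hbd; omega
  obtain ⟨c, hbc, hcd⟩ := below_exists hT hbr
  have hy : ∃ y, T.Adj b y ∧ y ≠ a ∧ y ≠ c := by
    by_contra hcon
    push_neg at hcon
    refine hred c ⟨a, b, ?_, ?_, hab, ?_, ?_⟩
    · intro e; rw [e] at hbd; omega
    · intro e; rw [e] at hcd; omega
    · intro w hw; exact Or.inl (hbuniq w hw)
    · intro w hw
      by_cases hwa : w = a
      · exact Or.inl hwa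
      · exact Or.inr (hcon w hw hwa)
  obtain ⟨y, hby, hya, hyc⟩ := hy
  have hyd : T.dist r b + 1 = T.dist r y := by
    rcases adjB hT (r := r) hby with hcase | hcase
    · exact absurd (below_unique hT hby hbc hcase hcd) hyc
    · exact hcase
  have hymax : ∀ v, T.dist r v ≤ T.dist r y := fun v => by
    have := hmax v; omega
  have hyr : y ≠ r := by rintro rfl; rw [SimpleGraph.dist_self] at hyd; omega
  obtain ⟨b', hyb', hb'd, hb'uniq⟩ := leaf_of_max hT hymax hyr
  have hbb' : b = b' := hb'uniq b hby.symm
  subst hbb'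
  exact ⟨a, y, b, fun e => hya e.symm, hbuniq, hb'uniq, hab, hyb', hD, by omega⟩

lemma exists_two_pairs [Fintype V] (hT : T.IsTree) (hred : Reduced T)
    (hcard : 3 ≤ Fintype.card V) :
    ∃ x y z w : V, x ≠ y ∧ z ≠ w ∧ x ≠ z ∧ x ≠ w ∧
      (∀ u, T.Adj x u ↔ T.Adj y u) ∧ (∀ u, T.Adj z u ↔ T.Adj w u) := by
  have hne : Nonempty V := Fintype.card_pos_iff.mp (by omega)
  obtain ⟨r⟩ := hne
  by_cases hdeep : ∃ v, 2 ≤ T.dist r v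
  · obtain ⟨v₀, hv₀⟩ := hdeep
    obtain ⟨x, y, b, hxy, hx, hy, hxb, hyb, hdx, hdy⟩ := deep_pair hT hred hv₀
    have h2 : 2 ≤ T.dist x r := by rw [SimpleGraph.dist_comm]; exact hdx
    obtain ⟨z, w, b', hzw, hz, hw, hzb, hwb, hdz, hdw⟩ := deep_pair hT hred h2
    refine ⟨x, y, z, w, hxy, hzw, ?_, ?_, ?_, ?_⟩
    · rintro rfl; rw [SimpleGraph.dist_self] at hdz; omega
    · rintro rfl; rw [SimpleGraph.dist_self] at hdw; omega
    · intro u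
      constructor
      · intro h; rw [hx u h]; exact hyb
      · intro h; rw [hy u h]; exact hxb
    · intro u
      constructor
      · intro h; rw [hz u h]; exact hwb
      · intro h; rw [hw u h]; exact hzb
  · push_neg at hdeep
    have hadj : ∀ v, v ≠ r → T.Adj r v := by
      intro v hv
      have h1 : 0 < T.dist r v := hT.isConnected.pos_dist_of_ne (fun e => hv e.symm)
      have h2 := hdeep v
      exact SimpleGraph.dist_eq_one_iff_adj.mp (by omega)
    have hstar : ∀ v, v ≠ r → ∀ u, T.Adj v u → u = r := by
      intro v hv u hu
      by_contra hur
      have h1 : T.dist r v = 1 := by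
        have := hT.isConnected.pos_dist_of_ne (fun e => hv e.symm); have := hdeep v; omega
      have h2 : T.dist r u = 1 := by
        have := hT.isConnected.pos_dist_of_ne (fun e => hur e.symm); have := hdeep u; omega
      rcases adjB hT (r := r) hu with hc | hc <;> omega
    have hnb : ∀ v, v ≠ r → ∀ u, T.Adj v u ↔ u = r := by
      intro v hv u
      exact ⟨hstar v hv u, fun e => e ▸ (hadj v hv).symm⟩
    set S : Finset V := Finset.univ.erase r with hS
    have hScard : 2 ≤ S.card := by
      have : S.card = Fintype.card V - 1 := by
        rw [hS, Finset.card_erase_of_mem (Finset.mem_univ r), Finset.card_univ]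
      omega
    rcases lt_or_eq_of_le hScard with h3 | h2
    · obtain ⟨x, y, z, hxS, hyS, hzS, hxy, hxz, hyz⟩ := Finset.two_lt_card_iff.mp h3
      have hxr := Finset.ne_of_mem_erase hxS
      have hyr := Finset.ne_of_mem_erase hyS
      have hzr := Finset.ne_of_mem_erase hzS
      refine ⟨x, y, y, z, hxy, hyz, hxy, hxz, ?_, ?_⟩
      · intro u; rw [hnb x hxr u, hnb y hyr u]
      · intro u; rw [hnb y hyr u, hnb z hzr u]
    · obtain ⟨a, b, hab, hSab⟩ := Finset.card_eq_two.mp h2.symm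
      exfalso
      have haR : a ≠ r := Finset.ne_of_mem_erase (hSab ▸ (Finset.mem_insert_self a {b}))
      have hbR : b ≠ r := Finset.ne_of_mem_erase
        (hSab ▸ (Finset.mem_insert_of_mem (Finset.mem_singleton_self b)))
      refine hred b ⟨a, r, hab, fun e => hbR e.symm, (hadj a haR).symm, ?_, ?_⟩
      · intro w hw; exact Or.inl (hstar a haR w hw)
      · intro w hw
        have hwr : w ≠ r := hw.ne'
        have hwS : w ∈ S := by rw [hS]; exact Finset.mem_erase.mpr ⟨hwr, Finset.mem_univ w⟩
        rw [hSab] at hwS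
        rcases Finset.mem_insert.mp hwS with h | h
        · exact Or.inl h
        · exact Or.inr (Finset.mem_singleton.mp h)

end TreeLemmas

/-! ### Linear algebra lemmas -/

lemma charpoly_conj_aux {n : Type*} [Fintype n] [DecidableEq n] {R : Type*} [CommRing R]
    (U W B : Matrix n n R) (h1 : U * W = 1) (h2 : W * U = 1) :
    (U * B * W).charpoly = B.charpoly := by
  unfold Matrix.charpoly
  have hUW : (C : R →+* R[X]).mapMatrix U * (C : R →+* R[X]).mapMatrix W = 1 := by
    rw [← _root_.map_mul, h1, _root_.map_one]
  have key : (U * B * W).charmatrix =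
      (C : R →+* R[X]).mapMatrix U * B.charmatrix * (C : R →+* R[X]).mapMatrix W := by
    unfold Matrix.charmatrix
    rw [Matrix.mul_sub, Matrix.sub_mul]
    congr 1
    · have hc : Commute (Matrix.scalar n (X : R[X])) ((C : R →+* R[X]).mapMatrix U) :=
        Matrix.scalar_commute _ (fun r => Commute.all _ r) _
      rw [← hc.eq, Matrix.mul_assoc, hUW, Matrix.mul_one]
    · rw [← _root_.map_mul, ← _root_.map_mul]
  rw [key, Matrix.det_mul, Matrix.det_mul]
  have h3 : ((C : R →+* R[X]).mapMatrix W).det * ((C : R →+* R[X]).mapMatrix U).det = 1 := by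
    rw [← Matrix.det_mul, ← _root_.map_mul, h2, _root_.map_one, Matrix.det_one]
  calc ((C : R →+* R[X]).mapMatrix U).det * B.charmatrix.det * ((C : R →+* R[X]).mapMatrix W).det
      = (((C : R →+* R[X]).mapMatrix W).det * ((C : R →+* R[X]).mapMatrix U).det)
        * B.charmatrix.det := by ring
    _ = B.charmatrix.det := by rw [h3, one_mul]

lemma charpoly_diagonal {n : Type*} [Fintype n] [DecidableEq n] {R : Type*} [CommRing R]
    (d : n → R) : (Matrix.diagonal d).charpoly = ∏ i, (X - C (d i)) := by
  unfold Matrix.charpoly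
  have : (Matrix.diagonal d).charmatrix = Matrix.diagonal (fun i => (X : R[X]) - C (d i)) := by
    apply Matrix.ext
    intro i j
    by_cases h : i = j
    · subst h; simp [Matrix.charmatrix_apply_eq]
    · rw [Matrix.charmatrix_apply_ne _ _ _ h, Matrix.diagonal_apply_ne _ h,
        Matrix.diagonal_apply_ne _ h, map_zero, neg_zero]
  rw [this, Matrix.det_diagonal]

lemma charpoly_eq_prod {n : Type*} [Fintype n] [DecidableEq n] {A : Matrix n n ℝ}
    (hA : A.IsHermitian) : A.charpoly = ∏ i, (X - C (hA.eigenvalues i)) := by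
  have hU1 : (hA.eigenvectorUnitary : Matrix n n ℝ) * star (hA.eigenvectorUnitary : Matrix n n ℝ)
      = 1 := (Matrix.mem_unitaryGroup_iff).mp hA.eigenvectorUnitary.2
  have hU2 : star (hA.eigenvectorUnitary : Matrix n n ℝ) * (hA.eigenvectorUnitary : Matrix n n ℝ)
      = 1 := (Matrix.mem_unitaryGroup_iff').mp hA.eigenvectorUnitary.2
  conv_lhs => rw [hA.spectral_theorem, Unitary.conjStarAlgAut_apply]
  rw [charpoly_conj_aux _ _ _ hU1 hU2, charpoly_diagonal]
  simp [RCLike.ofReal_real_eq_id, Function.comp]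

lemma roots_charpoly_eq {n : Type*} [Fintype n] [DecidableEq n] {A : Matrix n n ℝ}
    (hA : A.IsHermitian) :
    A.charpoly.roots = Multiset.map hA.eigenvalues Finset.univ.val := by
  rw [charpoly_eq_prod hA, Finset.prod_eq_multiset_prod]
  have : (fun i => (X : ℝ[X]) - C (hA.eigenvalues i)) = (fun a : ℝ => X - C a) ∘ hA.eigenvalues :=
    rfl
  rw [this, ← Multiset.map_map, Polynomial.roots_multiset_prod_X_sub_C]

lemma count_zero_ge {V : Type*} [Fintype V] [DecidableEq V] {A : Matrix V V ℝ}
    (hA : A.IsHermitian) (h2 : 2 ≤ Module.finrank ℝ (LinearMap.ker A.mulVecLin)) :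
    2 ≤ A.charpoly.roots.count 0 := by
  rw [roots_charpoly_eq hA, Multiset.count_map]
  have e1 : (Multiset.filter (fun a => 0 = hA.eigenvalues a) Finset.univ.val).card
      = Fintype.card {i // hA.eigenvalues i = 0} := by
    rw [Fintype.card_subtype]
    rw [← Finset.filter_val]
    congr 1
    ext i
    simp [eq_comm]
  have e2 : Fintype.card {i // ¬ hA.eigenvalues i = 0}
      = Fintype.card V - Fintype.card {i // hA.eigenvalues i = 0} :=
    Fintype.card_subtype_compl _
  have e3 : A.rank = Fintype.card {i // ¬ hA.eigenvalues i = 0} := hA.rank_eq_card_non_zero_eigs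
  have e4 : A.rank + Module.finrank ℝ (LinearMap.ker A.mulVecLin) = Fintype.card V := by
    have h := LinearMap.finrank_range_add_finrank_ker A.mulVecLin
    rw [Module.finrank_fintype_fun_eq_card] at h
    exact h
  have e5 : Fintype.card {i // hA.eigenvalues i = 0} ≤ Fintype.card V :=
    Fintype.card_subtype_le _
  rw [e1]
  omega

lemma adj_herm [Fintype V] {T : SimpleGraph V} [DecidableRel T.Adj] :
    (T.adjMatrix ℝ).IsHermitian := by
  rw [Matrix.IsHermitian, Matrix.conjTranspose_eq_transpose_of_trivial]
  exact T.isSymm_adjMatrix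

lemma ker_vec [Fintype V] [DecidableEq V] {T : SimpleGraph V} [DecidableRel T.Adj] {x y : V}
    (hN : ∀ u, T.Adj x u ↔ T.Adj y u) :
    T.adjMatrix ℝ *ᵥ (Pi.single x 1 - Pi.single y 1) = 0 := by
  ext v
  rw [Matrix.mulVec_sub]
  simp only [Pi.sub_apply, Pi.zero_apply, SimpleGraph.adjMatrix_mulVec_apply]
  have h1 : ∀ z : V, (∑ u ∈ T.neighborFinset v, Pi.single z (1:ℝ) u)
      = if T.Adj v z then 1 else 0 := by
    intro z
    simp [Pi.single_apply, Finset.sum_ite_eq', SimpleGraph.mem_neighborFinset]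
  rw [h1, h1]
  have : T.Adj v x ↔ T.Adj v y := by
    constructor
    · intro h; exact ((hN v).mp h.symm).symm
    · intro h; exact ((hN v).mpr h.symm).symm
  by_cases h : T.Adj v x
  · rw [if_pos h, if_pos (this.mp h), sub_self]
  · rw [if_neg h, if_neg (fun hc => h (this.mpr hc)), sub_self]

lemma two_le_ker [Fintype V] [DecidableEq V] {T : SimpleGraph V} [DecidableRel T.Adj]
    {x y z w : V} (hxy : x ≠ y) (hzw : z ≠ w) (hxz : x ≠ z) (hxw : x ≠ w)
    (hN1 : ∀ u, T.Adj x u ↔ T.Adj y u) (hN2 : ∀ u, T.Adj z u ↔ T.Adj w u) :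
    2 ≤ Module.finrank ℝ (LinearMap.ker (T.adjMatrix ℝ).mulVecLin) := by
  set u₁ : V → ℝ := Pi.single x 1 - Pi.single y 1 with hu₁
  set u₂ : V → ℝ := Pi.single z 1 - Pi.single w 1 with hu₂
  have hm₁ : u₁ ∈ LinearMap.ker (T.adjMatrix ℝ).mulVecLin := by
    rw [LinearMap.mem_ker, Matrix.mulVecLin_apply]; exact ker_vec hN1
  have hm₂ : u₂ ∈ LinearMap.ker (T.adjMatrix ℝ).mulVecLin := by
    rw [LinearMap.mem_ker, Matrix.mulVecLin_apply]; exact ker_vec hN2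
  have hval : ∀ (a b c : V),
      ((Pi.single a 1 - Pi.single b 1 : V → ℝ)) c
        = (if c = a then 1 else 0) - if c = b then 1 else 0 := by
    intro a b c
    simp [Pi.single_apply]
  have hli : LinearIndependent ℝ
      ![(⟨u₁, hm₁⟩ : LinearMap.ker (T.adjMatrix ℝ).mulVecLin), ⟨u₂, hm₂⟩] := by
    rw [LinearIndependent.pair_iff]
    intro s t hst
    have hfun : s • u₁ + t • u₂ = 0 := by
      have := congrArg Subtype.val hst
      simpa using this
    have hx0 : s = 0 := by
      have := congrArg (fun f => f x) hfun
      simp only [Pi.add_apply, Pi.smul_apply, smul_eq_mul, Pi.zero_apply] at this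
      rw [hu₁, hu₂, hval x y x, hval z w x] at this
      rw [if_pos rfl, if_neg hxy, if_neg hxz, if_neg hxw] at this
      simpa using this
    have ht0 : t = 0 := by
      have := congrArg (fun f => f z) hfun
      simp only [Pi.add_apply, Pi.smul_apply, smul_eq_mul, Pi.zero_apply] at this
      rw [hu₁, hu₂, hval x y z, hval z w z, hx0] at this
      rw [if_pos rfl, if_neg hzw] at this
      simpa using this
    exact ⟨hx0, ht0⟩
  have := hli.fintype_card_le_finrank
  simpa using this

lemma sq_one_of {e c : ℝ} (hc : c ≠ 0) (h : e * (e * c) = c) : e = 1 ∨ e = -1 := by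
  have h0 : (e * e - 1) * c = 0 := by rw [sub_mul, one_mul, mul_assoc, h, sub_self]
  rcases mul_eq_zero.mp h0 with hx | hx
  · have hsq : e * e = 1 := by have := sub_eq_zero.mp hx; linarith
    have hfac : (e - 1) * (e + 1) = 0 := by linear_combination hsq
    rcases mul_eq_zero.mp hfac with h' | h'
    · left; linarith
    · right; linarith
  · exact absurd hx hc

lemma two_le_numIn [Fintype V] {T : SimpleGraph V}
    {x y z w : V} (hxy : x ≠ y) (hzw : z ≠ w) (hxz : x ≠ z) (hxw : x ≠ w)
    (hN1 : ∀ u, T.Adj x u ↔ T.Adj y u) (hN2 : ∀ u, T.Adj z u ↔ T.Adj w u) :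
    2 ≤ numIn T := by
  have hcount : 2 ≤ (gCharpoly T).roots.count 0 := by
    unfold gCharpoly
    exact count_zero_ge adj_herm (two_le_ker hxy hzw hxz hxw hN1 hN2)
  unfold numIn
  calc 2 ≤ (gCharpoly T).roots.count 0 := hcount
    _ = ((gCharpoly T).roots.filter (fun x => -1 < x ∧ x < 1)).count 0 :=
      (Multiset.count_filter_of_pos (by norm_num)).symm
    _ ≤ ((gCharpoly T).roots.filter (fun x => -1 < x ∧ x < 1)).card :=
      Multiset.count_le_card 0 _

end Stmt6Aux

open Stmt6Aux in
theorem stmt6 {V : Type*} [Fintype V] (T : SimpleGraph V) (hT : T.IsTree) (hred : Reduced T) :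
    numIn T ≤ 1 ↔ Fintype.card V ≤ 2 := by
  constructor
  · intro h
    by_contra hc
    push_neg at hc
    obtain ⟨x, y, z, w, hxy, hzw, hxz, hxw, hN1, hN2⟩ := exists_two_pairs hT hred hc
    have := two_le_numIn hxy hzw hxz hxw hN1 hN2
    omega
  · intro h
    rcases Nat.lt_or_ge (Fintype.card V) 2 with h1 | h2
    · have hle : numIn T ≤ Fintype.card V := by
        calc numIn T ≤ Multiset.card (gCharpoly T).roots :=
              Multiset.card_le_card (Multiset.filter_le _ _)
          _ ≤ (gCharpoly T).natDegree := Polynomial.card_roots' _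
          _ = Fintype.card V := by
              unfold gCharpoly
              exact Matrix.charpoly_natDegree_eq_dim _
      omega
    · have hcard : Fintype.card V = 2 := le_antisymm h h2
      letI := Classical.decEq V
      letI := Classical.decRel T.Adj
      obtain ⟨p, q, hpq, huniv⟩ := Finset.card_eq_two.mp
        (by rw [Finset.card_univ]; exact hcard : (Finset.univ : Finset V).card = 2)
      have hall : ∀ c : V, c = p ∨ c = q := by
        intro c
        have : c ∈ (Finset.univ : Finset V) := Finset.mem_univ c
        rw [huniv] at this
        simpa using this
      have hadj : ∀ a b : V, a ≠ b → T.Adj a b := by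
        intro a b hab
        have hr : T.Reachable a b := hT.isConnected a b
        obtain ⟨pw⟩ := hr
        obtain ⟨u, hu, q', -⟩ := SimpleGraph.Walk.exists_eq_cons_of_ne hab pw
        have hua : u ≠ a := hu.ne'
        have : u = b := by
          rcases hall u with rfl | rfl <;> rcases hall a with rfl | rfl <;>
            rcases hall b with rfl | rfl <;> simp_all
        exact this ▸ hu
      have hent : ∀ c d : V, T.adjMatrix ℝ c d = if c = d then 0 else 1 := by
        intro c d
        by_cases hcd : c = d
        · subst hcd; simp
        · simp [SimpleGraph.adjMatrix_apply, hadj c d hcd, hcd]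
      have hAA : T.adjMatrix ℝ * T.adjMatrix ℝ = 1 := by
        apply Matrix.ext
        intro a b
        rw [Matrix.mul_apply]
        have huniv' : (Finset.univ : Finset V) = insert p {q} := huniv
        rw [huniv', Finset.sum_insert (by simp [hpq]), Finset.sum_singleton]
        rw [hent, hent, hent, hent, Matrix.one_apply]
        rcases hall a with ha | ha <;> rcases hall b with hb | hb <;> rw [ha, hb] <;>
          simp [hpq, Ne.symm hpq]
      have hroots : ∀ t ∈ (gCharpoly T).roots, t = 1 ∨ t = -1 := by
        intro t ht
        have hA : (T.adjMatrix ℝ).IsHermitian := adj_herm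
        rw [show gCharpoly T = (T.adjMatrix ℝ).charpoly from rfl, roots_charpoly_eq hA] at ht
        obtain ⟨i, -, rfl⟩ := Multiset.mem_map.mp ht
        have hv := hA.mulVec_eigenvectorBasis i
        have hnz : ⇑(hA.eigenvectorBasis i) ≠ 0 := by
          intro hzero
          have := hA.eigenvectorBasis.orthonormal.ne_zero i
          apply this
          ext j
          exact congrFun hzero j
        obtain ⟨j, hj⟩ := Function.ne_iff.mp hnz
        have h2' : T.adjMatrix ℝ *ᵥ (T.adjMatrix ℝ *ᵥ ⇑(hA.eigenvectorBasis i))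
            = ⇑(hA.eigenvectorBasis i) := by
          rw [Matrix.mulVec_mulVec, hAA, Matrix.one_mulVec]
        rw [hv, Matrix.mulVec_smul, hv] at h2'
        have hEq := congrFun h2' j
        simp only [Pi.smul_apply, smul_eq_mul] at hEq
        have hcne := hj
        simp only [Pi.zero_apply] at hcne
        exact sq_one_of hcne hEq
      unfold numIn
      have : ((gCharpoly T).roots.filter (fun x => -1 < x ∧ x < 1)) = 0 := by
        rw [Multiset.filter_eq_nil]
        intro t ht hmem
        rcases hroots t ht with rfl | rfl
        · exact absurd hmem.2 (by norm_num)
        · exact absurd hmem.1 (by norm_num)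
      rw [this]
      simp
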